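/- Let K = k1/k2 ∈ E(y) be nonzero differential-reduced with gcd(k1,k2)=1, and let r = q/b + v/k2 where b ∈ E[y] is squarefree, gcd(b, k2) = 1, deg q < deg b, and v ∈ N_K, a fixed E-linear complement of M_K = { k2·D(w) + k1·w : w ∈ E[y] } in E[y] spanned by monomials. If there exists s ∈ E(y) with r = D(s) + K·s, then r = 0. -/

import Mathlib

open Polynomial

/-- `K = k1/k2` is differential-reduced: `gcd(k2, k1 - i·D(k2)) = 1` for all integers `i`. -/
def DiffReduced {E : Type*} [Field E] (k1 k2 : E[X]) : Prop :=
  ∀ i : ℤ, IsCoprime k2 (k1 - (i : E[X]) * derivative k2)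

/-- The derivation `d/dy` on the field of rational functions `E(y)`. -/
noncomputable def Dr {E : Type*} [Field E] (f : RatFunc E) : RatFunc E :=
  (algebraMap E[X] (RatFunc E) (derivative f.num) * algebraMap E[X] (RatFunc E) f.denom -
      algebraMap E[X] (RatFunc E) f.num * algebraMap E[X] (RatFunc E) (derivative f.denom)) /
    (algebraMap E[X] (RatFunc E) f.denom) ^ 2

/-- The subspace `M_K = { k2·D(w) + k1·w : w ∈ E[y] }` for polynomial reduction. -/
noncomputable def MK {E : Type*} [Field E] (k1 k2 : E[X]) : Submodule E E[X] :=
  LinearMap.range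
    (LinearMap.mulLeft E k2 ∘ₗ (derivative : E[X] →ₗ[E] E[X]) + LinearMap.mulLeft E k1)

private lemma cancel_pow_dvd {R : Type*} [CommMonoidWithZero R] [IsCancelMulZero R] {t : R} (ht : t ≠ 0)
    {n : ℕ} {Y : R} (h : t ^ (n + 1) ∣ t ^ n * Y) : t ∣ Y := by
  rw [pow_succ] at h
  exact (mul_dvd_mul_iff_left (pow_ne_zero n ht)).mp h

theorem stmt_11 {E : Type*} [Field E] [CharZero E] (k1 k2 : E[X]) (hk1 : k1 ≠ 0)
    (hk2 : k2 ≠ 0) (hcop : IsCoprime k1 k2) (hdr : DiffReduced k1 k2)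
    (N : Submodule E E[X])
    (hNmono : ∃ S : Set ℕ, N = Submodule.span E ((fun n => (X : E[X]) ^ n) '' S))
    (hcompl : IsCompl (MK k1 k2) N)
    (q b v : E[X]) (hb : Squarefree b) (hbk : IsCoprime b k2)
    (hdeg : q.degree < b.degree) (hv : v ∈ N) (r : RatFunc E)
    (hr : r = algebraMap E[X] (RatFunc E) q / algebraMap E[X] (RatFunc E) b +
      algebraMap E[X] (RatFunc E) v / algebraMap E[X] (RatFunc E) k2)
    (hint : ∃ s : RatFunc E,
      r = Dr s + (algebraMap E[X] (RatFunc E) k1 / algebraMap E[X] (RatFunc E) k2) * s) :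
    r = 0 := by
  obtain ⟨s, hs⟩ := hint
  have hb0 : b ≠ 0 := by rintro rfl; exact not_squarefree_zero hb
  -- the cleared-denominator polynomial identity
  have hs2 : algebraMap E[X] (RatFunc E) q / algebraMap E[X] (RatFunc E) b +
      algebraMap E[X] (RatFunc E) v / algebraMap E[X] (RatFunc E) k2 =
      (algebraMap E[X] (RatFunc E) (derivative s.num) * algebraMap E[X] (RatFunc E) s.denom -
      algebraMap E[X] (RatFunc E) s.num * algebraMap E[X] (RatFunc E) (derivative s.denom)) /
    (algebraMap E[X] (RatFunc E) s.denom) ^ 2 +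
      (algebraMap E[X] (RatFunc E) k1 / algebraMap E[X] (RatFunc E) k2) *
      (algebraMap E[X] (RatFunc E) s.num / algebraMap E[X] (RatFunc E) s.denom) := by
    rw [RatFunc.num_div_denom, ← hr, hs]; rfl
  obtain ⟨a, d, hd0, hmon, hcopad, hs2⟩ : ∃ a d : E[X], d ≠ 0 ∧ d.Monic ∧ IsCoprime a d ∧
      algebraMap E[X] (RatFunc E) q / algebraMap E[X] (RatFunc E) b +
      algebraMap E[X] (RatFunc E) v / algebraMap E[X] (RatFunc E) k2 =
      (algebraMap E[X] (RatFunc E) (derivative a) * algebraMap E[X] (RatFunc E) d -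
      algebraMap E[X] (RatFunc E) a * algebraMap E[X] (RatFunc E) (derivative d)) /
    (algebraMap E[X] (RatFunc E) d) ^ 2 +
      (algebraMap E[X] (RatFunc E) k1 / algebraMap E[X] (RatFunc E) k2) *
      (algebraMap E[X] (RatFunc E) a / algebraMap E[X] (RatFunc E) d) :=
    ⟨s.num, s.denom, s.denom_ne_zero, s.monic_denom, s.isCoprime_num_denom, hs2⟩
  have key : (q * k2 + v * b) * d ^ 2 =
      b * (k2 * (derivative a * d - a * derivative d) + k1 * a * d) := by
    have hbn : algebraMap E[X] (RatFunc E) b ≠ 0 := RatFunc.algebraMap_ne_zero hb0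
    have hkn : algebraMap E[X] (RatFunc E) k2 ≠ 0 := RatFunc.algebraMap_ne_zero hk2
    have hdn : algebraMap E[X] (RatFunc E) d ≠ 0 := RatFunc.algebraMap_ne_zero hd0
    have key2 : (q * k2 + v * b) * d ^ 2 * (k2 * d) =
        (b * (k2 * (derivative a * d - a * derivative d) + k1 * a * d)) * (k2 * d) := by
      apply RatFunc.algebraMap_injective E
      push_cast [map_mul, map_add, map_sub, map_pow]
      field_simp at hs2
      linear_combination (algebraMap E[X] (RatFunc E) k2 * algebraMap E[X] (RatFunc E) d) * hs2
    exact mul_right_cancel₀ (mul_ne_zero hk2 hd0) key2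
  -- Step 1 : d is a unit
  have hdunit : IsUnit d := by
    by_contra hdu
    obtain ⟨t, htirr, htd⟩ := WfDvdMonoid.exists_irreducible_factor hdu hd0
    have htp : Prime t := htirr.prime
    have ht0 : t ≠ 0 := htp.ne_zero
    have hta : ¬ t ∣ a := fun h => htp.not_isUnit (hcopad.isUnit_of_dvd' h htd)
    have htdeg : 0 < t.natDegree := htirr.natDegree_pos
    have ht'0 : derivative t ≠ 0 := by
      have hdeq := degree_derivative_eq t htdeg
      intro h0
      rw [h0, degree_zero] at hdeq
      simp at hdeq
    have htt' : ¬ t ∣ derivative t := fun h =>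
      absurd (degree_le_of_dvd h ht'0) (not_le.mpr (degree_derivative_lt ht0))
    obtain ⟨w, hdw, htw⟩ :=
      (FiniteMultiplicity.of_not_isUnit htp.not_isUnit hd0).exists_eq_pow_mul_and_not_dvd
    obtain ⟨mm, hmm⟩ : ∃ mm, multiplicity t d = mm + 1 := by
      refine Nat.exists_eq_succ_of_ne_zero ?_
      intro h0
      rw [h0, pow_zero, one_mul] at hdw
      exact htw (hdw ▸ htd)
    rw [hmm] at hdw
    -- derivative of d
    have hd' : derivative d =
        t ^ mm * (C ((mm : E) + 1) * derivative t * w + t * derivative w) := by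
      rw [hdw, derivative_mul, derivative_pow_succ]
      push_cast
      ring
    set G : E[X] := C ((mm : E) + 1) * derivative t * w + t * derivative w with hG
    have hCunit : IsUnit (C ((mm : E) + 1)) :=
      Polynomial.isUnit_C.mpr (Ne.isUnit (Nat.cast_add_one_ne_zero mm))
    have htG : ¬ t ∣ G := by
      intro h
      have h1 : t ∣ C ((mm : E) + 1) * derivative t * w := by
        have := dvd_sub h (dvd_mul_right t (derivative w))
        simpa [hG] using this
      rcases htp.dvd_mul.mp h1 with h2 | h2
      · rcases htp.dvd_mul.mp h2 with h3 | h3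
        · exact htp.not_isUnit (isUnit_of_dvd_unit h3 hCunit)
        · exact htt' h3
      · exact htw h2
    have T1 : t ^ (mm + 2) ∣ (q * k2 + v * b) * d ^ 2 := by
      refine Dvd.intro (t ^ mm * ((q * k2 + v * b) * w ^ 2)) ?_
      rw [hdw]; ring
    by_cases htk2 : t ∣ k2
    · -- Case B : t ∣ k2
      have htk1 : ¬ t ∣ k1 := fun h => htp.not_isUnit (hcop.isUnit_of_dvd' h htk2)
      have htb : ¬ t ∣ b := fun h => htp.not_isUnit (hbk.isUnit_of_dvd' h htk2)
      obtain ⟨u, hk2u, htu⟩ :=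
        (FiniteMultiplicity.of_not_isUnit htp.not_isUnit hk2).exists_eq_pow_mul_and_not_dvd
      obtain ⟨ee, hee⟩ : ∃ ee, multiplicity t k2 = ee + 1 := by
        refine Nat.exists_eq_succ_of_ne_zero ?_
        intro h0
        rw [h0, pow_zero, one_mul] at hk2u
        exact htu (hk2u ▸ htk2)
      rw [hee] at hk2u
      have T2 : t ^ (mm + 2) ∣ b * k2 * (derivative a * d) := by
        refine Dvd.intro (t ^ ee * (b * u * (derivative a * w))) ?_
        rw [hdw, hk2u]; ring
      rcases Nat.eq_zero_or_pos ee with hee0 | hee0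
      · -- e = 1 : the differential-reduced case
        subst hee0
        rw [pow_one] at hk2u
        have h4 : t ^ (mm + 2) ∣ b * k2 * (a * derivative d) - b * (k1 * a * d) := by
          have hrw : b * k2 * (a * derivative d) - b * (k1 * a * d) =
              b * k2 * (derivative a * d) - (q * k2 + v * b) * d ^ 2 := by
            linear_combination key
          rw [hrw]
          exact dvd_sub T2 T1
        have h5 : t ∣ b * (a * (u * G - k1 * w)) := by
          refine cancel_pow_dvd ht0 (n := mm + 1) ?_
          have hrw : b * k2 * (a * derivative d) - b * (k1 * a * d) =
              t ^ (mm + 1) * (b * (a * (u * G - k1 * w))) := by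
            rw [hk2u, hd', hdw]; ring
          rw [← hrw]
          exact h4
        have h6 : t ∣ u * G - k1 * w := by
          rcases htp.dvd_mul.mp h5 with h | h
          · exact absurd h htb
          rcases htp.dvd_mul.mp h with h | h
          · exact absurd h hta
          · exact h
        have h7 : t ∣ w * (C ((mm : E) + 1) * u * derivative t - k1) := by
          have := dvd_sub h6 (dvd_mul_right t (u * derivative w))
          have hrw : u * G - k1 * w - t * (u * derivative w) =
              w * (C ((mm : E) + 1) * u * derivative t - k1) := by
            rw [hG]; ring
          rwa [hrw] at this
        have h8 : t ∣ C ((mm : E) + 1) * u * derivative t - k1 := by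
          rcases htp.dvd_mul.mp h7 with h | h
          · exact absurd h htw
          · exact h
        have hk2' : derivative k2 = derivative t * u + t * derivative u := by
          rw [hk2u, derivative_mul]
        have hcast : (((mm : ℤ) + 1 : ℤ) : E[X]) = C ((mm : E) + 1) := by
          push_cast
          simp
        have h9 : t ∣ k1 - (((mm : ℤ) + 1 : ℤ) : E[X]) * derivative k2 := by
          have := dvd_add (dvd_neg.mpr h8) (dvd_mul_right t (-(C ((mm : E) + 1) * derivative u)))
          have hrw : -(C ((mm : E) + 1) * u * derivative t - k1) +
              t * (-(C ((mm : E) + 1) * derivative u)) =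
              k1 - (((mm : ℤ) + 1 : ℤ) : E[X]) * derivative k2 := by
            rw [hcast, hk2']; ring
          rwa [hrw] at this
        exact htp.not_isUnit ((hdr ((mm : ℤ) + 1)).isUnit_of_dvd' htk2 h9)
      · -- e ≥ 2
        obtain ⟨ff, rfl⟩ : ∃ ff, ee = ff + 1 := ⟨ee - 1, by omega⟩
        have T3 : t ^ (mm + 2) ∣ b * k2 * (a * derivative d) := by
          refine Dvd.intro (t ^ ff * (b * u * (a * G))) ?_
          rw [hk2u, hd']; ring
        have h4 : t ^ (mm + 2) ∣ b * (k1 * a * d) := by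
          have hrw : b * (k1 * a * d) = (q * k2 + v * b) * d ^ 2 -
              b * k2 * (derivative a * d) + b * k2 * (a * derivative d) := by
            linear_combination -key
          rw [hrw]
          exact dvd_add (dvd_sub T1 T2) T3
        have h5 : t ∣ b * (k1 * a * w) := by
          refine cancel_pow_dvd ht0 (n := mm + 1) ?_
          have hrw : b * (k1 * a * d) = t ^ (mm + 1) * (b * (k1 * a * w)) := by
            rw [hdw]; ring
          rwa [hrw] at h4
        rcases htp.dvd_mul.mp h5 with h | h
        · exact htb h
        rcases htp.dvd_mul.mp h with h | h
        swap
        · exact htw h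
        rcases htp.dvd_mul.mp h with h | h
        · exact htk1 h
        · exact hta h
    · -- Case A : t ∤ k2
      by_cases htb : t ∣ b
      · obtain ⟨c, hbc⟩ := htb
        have htc : ¬ t ∣ c := by
          rintro ⟨x, hx⟩
          exact htp.not_isUnit (hb t ⟨x, by rw [hbc, hx]; ring⟩)
        have T2 : t ^ (mm + 2) ∣ b * k2 * (derivative a * d) := by
          refine Dvd.intro (c * k2 * (derivative a * w)) ?_
          rw [hbc, hdw]; ring
        have T3 : t ^ (mm + 2) ∣ b * (k1 * a * d) := by
          refine Dvd.intro (c * (k1 * a * w)) ?_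
          rw [hbc, hdw]; ring
        have h4 : t ^ (mm + 2) ∣ b * k2 * (a * derivative d) := by
          have hrw : b * k2 * (a * derivative d) =
              b * k2 * (derivative a * d) + b * (k1 * a * d) - (q * k2 + v * b) * d ^ 2 := by
            linear_combination key
          rw [hrw]
          exact dvd_sub (dvd_add T2 T3) T1
        have h5 : t ∣ c * k2 * (a * G) := by
          refine cancel_pow_dvd ht0 (n := mm + 1) ?_
          have hrw : b * k2 * (a * derivative d) = t ^ (mm + 1) * (c * k2 * (a * G)) := by
            rw [hbc, hd']; ring
          rwa [hrw] at h4
        rcases htp.dvd_mul.mp h5 with h | h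
        · rcases htp.dvd_mul.mp h with h | h
          · exact htc h
          · exact htk2 h
        rcases htp.dvd_mul.mp h with h | h
        · exact hta h
        · exact htG h
      · have T1' : t ^ (mm + 1) ∣ (q * k2 + v * b) * d ^ 2 :=
          dvd_trans (pow_dvd_pow t (by omega)) T1
        have T2 : t ^ (mm + 1) ∣ b * k2 * (derivative a * d) := by
          refine Dvd.intro (b * k2 * (derivative a * w)) ?_
          rw [hdw]; ring
        have T3 : t ^ (mm + 1) ∣ b * (k1 * a * d) := by
          refine Dvd.intro (b * (k1 * a * w)) ?_
          rw [hdw]; ring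
        have h4 : t ^ (mm + 1) ∣ b * k2 * (a * derivative d) := by
          have hrw : b * k2 * (a * derivative d) =
              b * k2 * (derivative a * d) + b * (k1 * a * d) - (q * k2 + v * b) * d ^ 2 := by
            linear_combination key
          rw [hrw]
          exact dvd_sub (dvd_add T2 T3) T1'
        have h5 : t ∣ b * k2 * (a * G) := by
          refine cancel_pow_dvd ht0 (n := mm) ?_
          have hrw : b * k2 * (a * derivative d) = t ^ mm * (b * k2 * (a * G)) := by
            rw [hd']; ring
          rwa [hrw] at h4
        rcases htp.dvd_mul.mp h5 with h | h
        · rcases htp.dvd_mul.mp h with h | h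
          · exact htb h
          · exact htk2 h
        rcases htp.dvd_mul.mp h with h | h
        · exact hta h
        · exact htG h
  -- Step 2 : d = 1, conclude
  have hd1 : d = 1 := hmon.eq_one_of_isUnit hdunit
  subst hd1
  have key1 : q * k2 + v * b = b * (k2 * derivative a + k1 * a) := by
    have : derivative (1 : E[X]) = 0 := derivative_one
    linear_combination key - (b * k2 * a) * this
  have hbq : b ∣ q * k2 := ⟨k2 * derivative a + k1 * a - v, by linear_combination key1⟩
  have hbq2 : b ∣ q := hbk.dvd_of_dvd_mul_right hbq
  have hq0 : q = 0 := by
    by_contra h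
    exact absurd (degree_le_of_dvd hbq2 h) (not_le.mpr hdeg)
  have hveq : b * v = b * (k2 * derivative a + k1 * a) := by
    rw [hq0] at key1
    linear_combination key1
  have hveq2 : v = k2 * derivative a + k1 * a := mul_left_cancel₀ hb0 hveq
  have hvMK : v ∈ MK k1 k2 := by
    rw [MK, LinearMap.mem_range]
    refine ⟨a, ?_⟩
    simp only [LinearMap.add_apply, LinearMap.comp_apply, LinearMap.mulLeft_apply]
    rw [hveq2]
  have hv0 : v = 0 := Submodule.disjoint_def.mp hcompl.disjoint v hvMK hv
  rw [hr, hq0, hv0]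
  simp
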